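/- Let E be a complex Banach space, A ∈ B(E), and ε₀ > 0. Assume that for every s ∈ ℝ the operator (ε₀ + is)I - A is invertible in B(E), and that the family {((ε₀ + is)I - A)^{-1} : s ∈ ℝ} is R-bounded with bound at most 1/(2ε₀). Then for every ε with 0 < ε < ε₀ and every s ∈ ℝ, the operator (-ε + is)I - A is invertible, with ((-ε + is)I - A)^{-1} = Σ_{n≥0} (ε₀ + ε)ⁿ (((ε₀ + is)I - A)^{-1})^{n+1} (the series converging in operator norm), and the family {((-ε + is)I - A)^{-1} : s ∈ ℝ} is R-bounded with bound at most 1/(ε₀ - ε). -/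

import Mathlib

set_option maxHeartbeats 1000000
set_option synthInstance.maxHeartbeats 400000

noncomputable section

/-- A family `𝒯` of bounded operators from `F` to `E` is `R`-bounded with bound `K`:
for all `N ≥ 1`, `T₁,…,T_N ∈ 𝒯` and `y₁,…,y_N ∈ F`,
`2^{-N} ∑_{ε ∈ {-1,1}^N} ‖∑ₙ εₙ Tₙ yₙ‖² ≤ K² 2^{-N} ∑_{ε ∈ {-1,1}^N} ‖∑ₙ εₙ yₙ‖²`
(signs `ε : Fin N → Bool`, with `true ↦ 1` and `false ↦ -1`). -/
def RBounded {F E : Type*} [NormedAddCommGroup F] [NormedSpace ℂ F]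
    [NormedAddCommGroup E] [NormedSpace ℂ E]
    (𝒯 : Set (F →L[ℂ] E)) (K : ℝ) : Prop :=
  ∀ (N : ℕ) (T : Fin N → (F →L[ℂ] E)), (∀ n, T n ∈ 𝒯) → ∀ y : Fin N → F,
    ((2 : ℝ) ^ N)⁻¹ *
        ∑ ε : Fin N → Bool,
          ‖∑ n : Fin N, (if ε n then (1 : ℝ) else -1) • T n (y n)‖ ^ 2
      ≤ K ^ 2 * (((2 : ℝ) ^ N)⁻¹ *
          ∑ ε : Fin N → Bool,
            ‖∑ n : Fin N, (if ε n then (1 : ℝ) else -1) • y n‖ ^ 2)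

open ContinuousLinearMap

lemma pilp_norm_sq {ι : Type*} [Fintype ι] {E : Type*} [NormedAddCommGroup E]
    (f : PiLp 2 (fun _ : ι => E)) : ‖f‖ ^ 2 = ∑ i, ‖f i‖ ^ 2 := by
  have h : ‖f‖ = Real.sqrt (∑ i, ‖f i‖ ^ 2) := by
    rw [PiLp.norm_eq_sum (by norm_num), Real.sqrt_eq_rpow]
    norm_num
  rw [h, Real.sq_sqrt (Finset.sum_nonneg fun i _ => sq_nonneg _)]

lemma rb_aux {E : Type*} [NormedAddCommGroup E] [NormedSpace ℂ E] [CompleteSpace E]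
    {N : ℕ} (Rt : Fin N → (E →L[ℂ] E)) (K c C : ℝ) (hK : 0 < K) (hc : 0 < c)
    (hcK : c * K < 1) (hC : K * (1 - c * K)⁻¹ ≤ C) (y : Fin N → E)
    (hRnorm : ∀ n, ‖Rt n‖ ≤ K)
    (hstep : ∀ z : Fin N → E,
      (∑ e : Fin N → Bool, ‖∑ n, (if e n then (1:ℝ) else -1) • Rt n (z n)‖ ^ 2)
        ≤ K ^ 2 * ∑ e : Fin N → Bool, ‖∑ n, (if e n then (1:ℝ) else -1) • z n‖ ^ 2) :
    (∑ e : Fin N → Bool, ‖∑ n, (if e n then (1:ℝ) else -1) •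
        (∑' k : ℕ, c ^ k • (Rt n) ^ (k+1)) (y n)‖ ^ 2)
      ≤ C ^ 2 * ∑ e : Fin N → Bool, ‖∑ n, (if e n then (1:ℝ) else -1) • y n‖ ^ 2 := by
  classical
  haveI : CompleteSpace (PiLp 2 (fun _ : Fin N → Bool => E)) :=
    inferInstance
  have hcK0 : (0:ℝ) ≤ c * K := by positivity
  have h1cK : (0:ℝ) < 1 - c * K := by linarith
  have hC0 : 0 ≤ C := le_trans (by positivity) hC
  -- operator power norm bounds
  have hRpow : ∀ n k, ‖(Rt n) ^ (k+1)‖ ≤ K ^ (k+1) := fun n k =>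
    le_trans (norm_pow_le' _ (Nat.succ_pos k)) (pow_le_pow_left₀ (norm_nonneg _) (hRnorm n) _)
  -- summability of operator series
  have hsumop : ∀ n, Summable (fun k : ℕ => c ^ k • (Rt n) ^ (k+1)) := by
    intro n
    refine Summable.of_norm (Summable.of_nonneg_of_le (fun k => norm_nonneg _)
      (fun k => ?_) ((summable_geometric_of_lt_one hcK0 hcK).mul_left K))
    calc ‖c ^ k • (Rt n) ^ (k+1)‖ ≤ ‖(c ^ k : ℝ)‖ * ‖(Rt n) ^ (k+1)‖ :=
          norm_smul_le (c ^ k) ((Rt n) ^ (k+1))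
      _ = c ^ k * ‖(Rt n) ^ (k+1)‖ := by rw [Real.norm_of_nonneg (pow_nonneg hc.le k)]
      _ ≤ c ^ k * K ^ (k+1) := mul_le_mul_of_nonneg_left (hRpow n k) (pow_nonneg hc.le k)
      _ = K * (c * K) ^ k := by rw [mul_pow]; ring
  -- summability of vector series
  have hsumv : ∀ n, Summable (fun k : ℕ => c ^ k • ((Rt n) ^ (k+1)) (y n)) := by
    intro n
    refine Summable.of_norm (Summable.of_nonneg_of_le (fun k => norm_nonneg _)
      (fun k => ?_) (((summable_geometric_of_lt_one hcK0 hcK).mul_left K).mul_right ‖y n‖))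
    calc ‖c ^ k • ((Rt n) ^ (k+1)) (y n)‖ = c ^ k * ‖((Rt n) ^ (k+1)) (y n)‖ := by
          rw [norm_smul, Real.norm_of_nonneg (pow_nonneg hc.le k)]
      _ ≤ c ^ k * (K ^ (k+1) * ‖y n‖) := by
          refine mul_le_mul_of_nonneg_left ?_ (pow_nonneg hc.le k)
          exact le_trans (le_opNorm _ _) (mul_le_mul_of_nonneg_right (hRpow n k) (norm_nonneg _))
      _ = K * (c * K) ^ k * ‖y n‖ := by rw [mul_pow]; ring
  set u : ℕ → PiLp 2 (fun _ : Fin N → Bool => E) := fun k =>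
    (WithLp.equiv 2 ((Fin N → Bool) → E)).symm
      (fun e => ∑ n, (if e n then (1:ℝ) else -1) • ((Rt n) ^ k) (y n)) with hu
  have happ : ∀ (k : ℕ) (e : Fin N → Bool), u k e = ∑ n, (if e n then (1:ℝ) else -1) • ((Rt n) ^ k) (y n) := fun k e => rfl
  have hun : ∀ k : ℕ, ‖u k‖ ^ 2 = ∑ e : Fin N → Bool, ‖∑ n, (if e n then (1:ℝ) else -1) • ((Rt n) ^ k) (y n)‖ ^ 2 := by
    intro k
    rw [pilp_norm_sq]
    exact Finset.sum_congr rfl fun e _ => by rw [happ]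
  have hustep : ∀ k, ‖u (k+1)‖ ≤ K * ‖u k‖ := by
    intro k
    have h := hstep (fun n => ((Rt n) ^ k) (y n))
    simp only [← ContinuousLinearMap.mul_apply, ← pow_succ'] at h
    have h2 : ‖u (k+1)‖ ^ 2 ≤ (K * ‖u k‖) ^ 2 := by
      rw [hun, mul_pow, hun]
      exact h
    exact (pow_le_pow_iff_left₀ (norm_nonneg _) (by positivity) two_ne_zero).mp h2
  have hubound : ∀ k, ‖u k‖ ≤ K ^ k * ‖u 0‖ := by
    intro k
    induction k with
    | zero => simp
    | succ k ih =>
      calc ‖u (k+1)‖ ≤ K * ‖u k‖ := hustep k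
        _ ≤ K * (K ^ k * ‖u 0‖) := mul_le_mul_of_nonneg_left ih hK.le
        _ = K ^ (k+1) * ‖u 0‖ := by ring
  set v : ℕ → PiLp 2 (fun _ : Fin N → Bool => E) := fun k => c ^ k • u (k+1) with hv
  have hvnorm : ∀ k, ‖v k‖ ≤ K * (c * K) ^ k * ‖u 0‖ := by
    intro k
    calc ‖v k‖ ≤ ‖(c ^ k : ℝ)‖ * ‖u (k+1)‖ := norm_smul_le (c ^ k) (u (k+1))
      _ = c ^ k * ‖u (k+1)‖ := by rw [Real.norm_of_nonneg (pow_nonneg hc.le k)]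
      _ ≤ c ^ k * (K ^ (k+1) * ‖u 0‖) :=
          mul_le_mul_of_nonneg_left (hubound (k+1)) (pow_nonneg hc.le k)
      _ = K * (c * K) ^ k * ‖u 0‖ := by rw [mul_pow]; ring
  have hmaj : Summable (fun k : ℕ => K * (c * K) ^ k * ‖u 0‖) :=
    ((summable_geometric_of_lt_one hcK0 hcK).mul_left K).mul_right ‖u 0‖
  have hvns : Summable (fun k => ‖v k‖) :=
    Summable.of_nonneg_of_le (fun k => norm_nonneg _) hvnorm hmaj
  have hvsum : Summable v := Summable.of_norm hvns
  have hvtsum_norm : ‖∑' k, v k‖ ≤ C * ‖u 0‖ := by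
    calc ‖∑' k, v k‖ ≤ ∑' k, ‖v k‖ := norm_tsum_le_tsum_norm hvns
      _ ≤ ∑' k, K * (c * K) ^ k * ‖u 0‖ := Summable.tsum_le_tsum hvnorm hvns hmaj
      _ = (K * (1 - c * K)⁻¹) * ‖u 0‖ := by
          rw [show (fun k : ℕ => K * (c * K) ^ k * ‖u 0‖)
              = fun k : ℕ => (K * ‖u 0‖) * (c * K) ^ k from funext fun k => by ring]
          rw [tsum_mul_left, tsum_geometric_of_lt_one hcK0 hcK]
          ring
      _ ≤ C * ‖u 0‖ := mul_le_mul_of_nonneg_right hC (norm_nonneg _)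
  have htv : ∀ e : Fin N → Bool, (∑' k, v k) e
      = ∑ n, (if e n then (1:ℝ) else -1) • (∑' k : ℕ, c ^ k • (Rt n) ^ (k+1)) (y n) := by
    intro e
    let L : PiLp 2 (fun _ : Fin N → Bool => E) →L[ℝ] E :=
      (ContinuousLinearMap.proj e).comp
        (PiLp.continuousLinearEquiv 2 ℝ (fun _ : Fin N → Bool => E)).toContinuousLinearMap
    have hL : ∀ w : PiLp 2 (fun _ : Fin N → Bool => E), L w = w e := fun w => rfl
    have hvke : ∀ k, v k e = ∑ n, (if e n then (1:ℝ) else -1) • (c ^ k • ((Rt n) ^ (k+1)) (y n)) := by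
      intro k
      have h1 : v k e = c ^ k • (u (k+1) e) := rfl
      rw [h1, happ, Finset.smul_sum]
      exact Finset.sum_congr rfl fun n _ => smul_comm _ _ _
    calc (∑' k, v k) e = L (∑' k, v k) := (hL _).symm
      _ = ∑' k, L (v k) := L.map_tsum hvsum
      _ = ∑' k, ∑ n, (if e n then (1:ℝ) else -1) • (c ^ k • ((Rt n) ^ (k+1)) (y n)) :=
          tsum_congr fun k => by rw [hL, hvke]
      _ = ∑ n, ∑' k, (if e n then (1:ℝ) else -1) • (c ^ k • ((Rt n) ^ (k+1)) (y n)) :=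
          Summable.tsum_finsetSum (fun n _ => (hsumv n).const_smul _)
      _ = ∑ n, (if e n then (1:ℝ) else -1) • ∑' k, c ^ k • ((Rt n) ^ (k+1)) (y n) :=
          Finset.sum_congr rfl fun n _ => Summable.tsum_const_smul _ (hsumv n)
      _ = ∑ n, (if e n then (1:ℝ) else -1) • (∑' k : ℕ, c ^ k • (Rt n) ^ (k+1)) (y n) := by
          refine Finset.sum_congr rfl fun n _ => ?_
          congr 1
          have hap := (ContinuousLinearMap.apply ℂ E (y n)).map_tsum (hsumop n)
          simp only [ContinuousLinearMap.apply_apply] at hap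
          rw [hap]
          exact tsum_congr fun k => by simp
  have hfin : ‖∑' k, v k‖ ^ 2 ≤ C ^ 2 * ‖u 0‖ ^ 2 := by
    calc ‖∑' k, v k‖ ^ 2 ≤ (C * ‖u 0‖) ^ 2 :=
          pow_le_pow_left₀ (norm_nonneg _) hvtsum_norm 2
      _ = C ^ 2 * ‖u 0‖ ^ 2 := by ring
  have h1 : (∑ e : Fin N → Bool, ‖∑ n, (if e n then (1:ℝ) else -1) •
      (∑' k : ℕ, c ^ k • (Rt n) ^ (k+1)) (y n)‖ ^ 2) = ‖∑' k, v k‖ ^ 2 := by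
    rw [pilp_norm_sq]
    exact (Finset.sum_congr rfl fun e _ => by rw [htv e]).symm
  have h0 : (∑ e : Fin N → Bool, ‖∑ n, (if e n then (1:ℝ) else -1) • y n‖ ^ 2) = ‖u 0‖ ^ 2 := by
    rw [hun 0]
    exact Finset.sum_congr rfl fun e _ => by simp
  rw [h1, h0]
  exact hfin

/-- Let `A ∈ B(E)` and `ε₀ > 0`. Assume that for every `s ∈ ℝ` the operator
`(ε₀ + is)I - A` is invertible (with inverse `Rs s`), and that `{((ε₀+is)I - A)⁻¹ : s ∈ ℝ}` is
`R`-bounded with bound at most `1/(2ε₀)`. Then for every `0 < ε < ε₀` and every `s ∈ ℝ` the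
operator `(-ε + is)I - A` is invertible with inverse
`∑_{n≥0} (ε₀+ε)ⁿ (((ε₀+is)I - A)⁻¹)^{n+1}` (the series converging in operator norm), and the
family `{((-ε+is)I - A)⁻¹ : s ∈ ℝ}` is `R`-bounded with bound at most `1/(ε₀-ε)`. -/
theorem stochastic_datko_pazy_stmt17
    {E : Type*} [NormedAddCommGroup E] [NormedSpace ℂ E] [CompleteSpace E]
    (A : E →L[ℂ] E) (ε₀ : ℝ) (hε₀ : 0 < ε₀)
    (Rs : ℝ → (E →L[ℂ] E))
    (hinv : ∀ s : ℝ,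
      ((((ε₀ : ℂ) + s * Complex.I) • (1 : E →L[ℂ] E) - A) ∘L Rs s = 1 ∧
        Rs s ∘L (((ε₀ : ℂ) + s * Complex.I) • (1 : E →L[ℂ] E) - A) = 1))
    (hRb : RBounded {T : E →L[ℂ] E | ∃ s : ℝ, T = Rs s} (1 / (2 * ε₀))) :
    ∀ ε : ℝ, 0 < ε → ε < ε₀ →
      (∀ s : ℝ,
        Summable (fun n : ℕ => (ε₀ + ε) ^ n • (Rs s) ^ (n + 1)) ∧
        (((-ε : ℂ) + s * Complex.I) • (1 : E →L[ℂ] E) - A) ∘L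
            (∑' n : ℕ, (ε₀ + ε) ^ n • (Rs s) ^ (n + 1)) = 1 ∧
        (∑' n : ℕ, (ε₀ + ε) ^ n • (Rs s) ^ (n + 1)) ∘L
            (((-ε : ℂ) + s * Complex.I) • (1 : E →L[ℂ] E) - A) = 1) ∧
      RBounded {T : E →L[ℂ] E |
          ∃ s : ℝ, T = ∑' n : ℕ, (ε₀ + ε) ^ n • (Rs s) ^ (n + 1)}
        (1 / (ε₀ - ε)) := by
  intro ε hε hεlt
  set c : ℝ := ε₀ + ε with hc
  set K : ℝ := 1 / (2 * ε₀) with hKdef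
  have hK : 0 < K := by positivity
  have hcpos : 0 < c := by positivity
  have hcK : c * K < 1 := by
    rw [hKdef, hc, mul_one_div, div_lt_one (by positivity)]
    linarith
  have hcK0 : 0 ≤ c * K := by positivity
  -- norm bound on resolvents
  have hRn : ∀ s, ‖Rs s‖ ≤ K := by
    intro s
    refine opNorm_le_bound _ hK.le fun x => ?_
    have h := hRb 1 (fun _ => Rs s) (fun _ => ⟨s, rfl⟩) (fun _ => x)
    have e1 : ∀ (z : E),
        (∑ εf : Fin 1 → Bool, ‖∑ n : Fin 1, (if εf n then (1:ℝ) else -1) • z‖ ^ 2)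
          = 2 * ‖z‖ ^ 2 := by
      intro z
      rw [Fintype.sum_equiv (Equiv.funUnique (Fin 1) Bool)
        (fun εf : Fin 1 → Bool => ‖∑ n : Fin 1, (if εf n then (1:ℝ) else -1) • z‖ ^ 2)
        (fun b => ‖(if b then (1:ℝ) else -1) • z‖ ^ 2)
        (fun εf => by simp [Fin.sum_univ_one, Equiv.funUnique])]
      rw [Fintype.sum_bool]
      simp [norm_smul, two_mul]
    simp only [e1] at h
    have h2 : ‖Rs s x‖ ^ 2 ≤ K ^ 2 * ‖x‖ ^ 2 := by
      norm_num at h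
      linarith
    have h3 : ‖Rs s x‖ ^ 2 ≤ (K * ‖x‖) ^ 2 := by rw [mul_pow]; exact h2
    exact (pow_le_pow_iff_left₀ (norm_nonneg _) (by positivity) two_ne_zero).mp h3
  have hRpow : ∀ s k, ‖(Rs s) ^ (k+1)‖ ≤ K ^ (k+1) := fun s k =>
    le_trans (norm_pow_le' _ (Nat.succ_pos k)) (pow_le_pow_left₀ (norm_nonneg _) (hRn s) _)
  have hnormb : ∀ s n, ‖(c ^ n • (Rs s) ^ (n+1) : E →L[ℂ] E)‖ ≤ K * (c*K) ^ n := by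
    intro s n
    calc ‖c ^ n • (Rs s) ^ (n+1)‖ ≤ ‖(c ^ n : ℝ)‖ * ‖(Rs s) ^ (n+1)‖ :=
          norm_smul_le (c ^ n) ((Rs s) ^ (n+1))
      _ = c ^ n * ‖(Rs s) ^ (n+1)‖ := by
          rw [Real.norm_of_nonneg (pow_nonneg hcpos.le n)]
      _ ≤ c ^ n * K ^ (n+1) :=
          mul_le_mul_of_nonneg_left (hRpow s n) (pow_nonneg hcpos.le n)
      _ = K * (c*K) ^ n := by rw [mul_pow]; ring
  have hgeoK : Summable (fun n : ℕ => K * (c*K) ^ n) :=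
    (summable_geometric_of_lt_one hcK0 hcK).mul_left K
  have hsumm : ∀ s, Summable (fun n : ℕ => c ^ n • (Rs s) ^ (n+1)) := by
    intro s
    exact Summable.of_norm (Summable.of_nonneg_of_le (fun n => norm_nonneg _)
      (hnormb s) hgeoK)
  -- inverse identities
  have hmain : ∀ s : ℝ,
      (((-ε : ℂ) + s * Complex.I) • (1 : E →L[ℂ] E) - A) ∘L
          (∑' n : ℕ, c ^ n • (Rs s) ^ (n + 1)) = 1 ∧
      (∑' n : ℕ, c ^ n • (Rs s) ^ (n + 1)) ∘L
          (((-ε : ℂ) + s * Complex.I) • (1 : E →L[ℂ] E) - A) = 1 := by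
    intro s
    have hB1 : ((((ε₀:ℂ) + s * Complex.I) • (1 : E →L[ℂ] E) - A)) ∘L Rs s = 1 := (hinv s).1
    have hB2 : Rs s ∘L (((ε₀:ℂ) + s * Complex.I) • (1 : E →L[ℂ] E) - A) = 1 := (hinv s).2
    set R : E →L[ℂ] E := Rs s with hR
    set B : E →L[ℂ] E := ((ε₀:ℂ) + s * Complex.I) • 1 - A with hB
    have hDB : (((-ε:ℂ) + s * Complex.I) • (1 : E →L[ℂ] E) - A) = B - ((c:ℝ):ℂ) • 1 := by
      have hsc : ((ε₀:ℂ) + s * Complex.I) • (1 : E →L[ℂ] E) - ((c:ℝ):ℂ) • 1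
          = ((-ε:ℂ) + s * Complex.I) • 1 := by
        rw [← sub_smul]
        congr 1
        rw [hc]
        push_cast
        ring
      rw [hB, sub_right_comm, hsc]
    have hg : Summable (fun n : ℕ => c ^ n • (R ^ n : E →L[ℂ] E)) := by
      refine Summable.of_norm (Summable.of_nonneg_of_le (fun n => norm_nonneg _) (fun n => ?_)
        (summable_geometric_of_lt_one hcK0 hcK))
      calc ‖c ^ n • (R ^ n : E →L[ℂ] E)‖ ≤ ‖(c ^ n : ℝ)‖ * ‖(R ^ n : E →L[ℂ] E)‖ :=
            norm_smul_le (c ^ n) (R ^ n)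
        _ = c ^ n * ‖(R ^ n : E →L[ℂ] E)‖ := by
            rw [Real.norm_of_nonneg (pow_nonneg hcpos.le n)]
        _ ≤ c ^ n * K ^ n := by
            refine mul_le_mul_of_nonneg_left ?_ (pow_nonneg hcpos.le n)
            cases n with
            | zero =>
              simpa [ContinuousLinearMap.one_def] using
                (norm_id_le : ‖ContinuousLinearMap.id ℂ E‖ ≤ 1)
            | succ k => exact hRpow s k
        _ = (c*K) ^ n := (mul_pow c K n).symm
    have hBS : B ∘L (∑' n : ℕ, c ^ n • R ^ (n+1)) = ∑' n : ℕ, c ^ n • (R ^ n : E →L[ℂ] E) := by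
      have hmap := (compL ℂ E E E B).map_tsum (hsumm s)
      simp only [compL_apply] at hmap
      rw [hmap]
      refine tsum_congr fun n => ?_
      rw [comp_smul]
      congr 1
      rw [pow_succ', mul_def, ← comp_assoc, hB1, ContinuousLinearMap.one_def,
        ContinuousLinearMap.id_comp]
    have hSB : (∑' n : ℕ, c ^ n • R ^ (n+1)) ∘L B = ∑' n : ℕ, c ^ n • (R ^ n : E →L[ℂ] E) := by
      have hmap := ((compL ℂ E E E).flip B).map_tsum (hsumm s)
      simp only [flip_apply, compL_apply] at hmap
      rw [hmap]
      refine tsum_congr fun n => ?_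
      rw [smul_comp]
      congr 1
      rw [pow_succ, mul_def, comp_assoc, hB2, ContinuousLinearMap.one_def,
        ContinuousLinearMap.comp_id]
    have hshift : ((c:ℝ):ℂ) • (∑' n : ℕ, c ^ n • R ^ (n+1))
        = ∑' n : ℕ, c ^ (n+1) • (R ^ (n+1) : E →L[ℂ] E) := by
      rw [← Summable.tsum_const_smul (((c:ℝ):ℂ)) (hsumm s)]
      refine tsum_congr fun n => ?_
      rw [Complex.coe_smul, smul_smul, ← pow_succ']
    have htel : (∑' n : ℕ, c ^ n • (R ^ n : E →L[ℂ] E))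
        - (∑' n : ℕ, c ^ (n+1) • (R ^ (n+1) : E →L[ℂ] E)) = 1 := by
      rw [Summable.tsum_eq_zero_add hg]
      simp
    constructor
    · rw [hDB, sub_comp, smul_comp, ContinuousLinearMap.one_def,
        ContinuousLinearMap.id_comp, hBS, hshift, htel]
      exact ContinuousLinearMap.one_def
    · rw [hDB, comp_sub, comp_smul, ContinuousLinearMap.one_def,
        ContinuousLinearMap.comp_id, hSB, hshift, htel]
      exact ContinuousLinearMap.one_def
  refine ⟨fun s => ⟨hsumm s, (hmain s).1, (hmain s).2⟩, ?_⟩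
  -- R-boundedness
  intro N T hT y
  simp only [Set.mem_setOf_eq] at hT
  choose sf hsf using hT
  have hstep : ∀ z : Fin N → E,
      (∑ e : Fin N → Bool, ‖∑ n, (if e n then (1:ℝ) else -1) • Rs (sf n) (z n)‖ ^ 2)
        ≤ K ^ 2 * ∑ e : Fin N → Bool, ‖∑ n, (if e n then (1:ℝ) else -1) • z n‖ ^ 2 := by
    intro z
    have h := hRb N (fun n => Rs (sf n)) (fun n => ⟨sf n, rfl⟩) z
    have hp : (0:ℝ) < ((2:ℝ)^N)⁻¹ := by positivity
    exact (mul_le_mul_iff_right₀ hp).mp (h.trans_eq (by ring))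
  have hCeq : K * (1 - c*K)⁻¹ ≤ 1/(ε₀ - ε) := by
    apply le_of_eq
    have h1 : 1 - c*K = (ε₀ - ε) / (2*ε₀) := by
      rw [hKdef, hc]
      field_simp
      ring
    have h2 : (0:ℝ) < ε₀ - ε := by linarith
    rw [h1, hKdef, inv_div]
    field_simp
  have key := rb_aux (fun n => Rs (sf n)) K c (1/(ε₀-ε)) hK hcpos hcK hCeq y
    (fun n => hRn (sf n)) hstep
  simp only [← hsf] at key
  have hfin := mul_le_mul_of_nonneg_left key
    (by positivity : (0:ℝ) ≤ ((2:ℝ)^N)⁻¹)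
  exact hfin.trans_eq (by ring)

end
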